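/- Let R be a discrete φ-chained ring (every nonnil ideal of R is principal, generated by a non-nilpotent element) and let E be a nonnil-divisible R-module. Then E is nonnil-injective. -/

import Mathlib

open CategoryTheory

noncomputable section Aux

universe u

variable {R : Type u} [CommRing R]

instance : CategoryTheory.Projective (ModuleCat.of R R) :=
  ModuleCat.projective_of_free (Module.Basis.singleton PUnit.{u+1} R)

/-- the complex  ... ← syzygies ← R ←(·a) R -/
noncomputable def resCplx (a : R) : ChainComplex (ModuleCat.{u} R) ℕ :=
  ChainComplex.mk' (ModuleCat.of R R) (ModuleCat.of R R)
    (ModuleCat.ofHom (LinearMap.mul R R a))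
    (fun f => ⟨_, Projective.d f,
      (Category.assoc _ _ _).trans ((congrArg _ (Limits.kernel.condition f)).trans Limits.comp_zero)⟩)

lemma resCplx_d_1_0 (a : R) :
    (resCplx a).d 1 0 = ModuleCat.ofHom (LinearMap.mul R R a) := by
  simp [resCplx]

lemma resCplx_exactAt_succ (a : R) (n : ℕ) : (resCplx a).ExactAt (n + 1) := by
  rw [HomologicalComplex.exactAt_iff' _ (n + 1 + 1) (n + 1) n (by simp) (by simp)]
  dsimp [resCplx, HomologicalComplex.sc', HomologicalComplex.shortComplexFunctor',
      ChainComplex.mk', ChainComplex.mk]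
  simp only [ChainComplex.of.d, dite_true, eqToHom_refl, Category.id_comp]
  match n with
  | 0 => apply CategoryTheory.exact_d_f
  | n + 1 => apply CategoryTheory.exact_d_f

section Res

variable {R : Type u} [CommRing R]
variable (a : R) (I : Ideal R)

instance resCplx_projective (n : ℕ) : Projective ((resCplx a).X n) := by
  obtain (_ | _ | _ | n) := n
  · exact inferInstanceAs (Projective (ModuleCat.of R R))
  · exact inferInstanceAs (Projective (ModuleCat.of R R))
  · apply Projective.projective_over
  · apply Projective.projective_over

lemma d10_comp_mkQ (hIa : I = Ideal.span {a}) : (resCplx a).d 1 0 ≫ ModuleCat.ofHom (Submodule.mkQ I) = 0 := by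
  rw [resCplx_d_1_0]
  apply ModuleCat.hom_ext
  apply LinearMap.ext
  intro (r : R)
  show Submodule.mkQ I (a * r) = 0
  rw [Submodule.mkQ_apply, Submodule.Quotient.mk_eq_zero, hIa]
  exact Ideal.mul_mem_right r _ (Ideal.subset_span rfl)

lemma exact_mul_mkQ (hIa : I = Ideal.span {a}) :
    (ShortComplex.mk ((resCplx a).d 1 0) (ModuleCat.ofHom (Submodule.mkQ I))
      (d10_comp_mkQ a I hIa)).Exact := by
  rw [ShortComplex.moduleCat_exact_iff]
  intro (x : R) hx
  have hx' : (x : R) ∈ I := (Submodule.Quotient.mk_eq_zero I).1 hx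
  rw [hIa, Ideal.mem_span_singleton] at hx'
  obtain ⟨r, rfl⟩ := hx'
  refine ⟨r, ?_⟩
  show ((resCplx a).d 1 0) r = a * r
  rw [resCplx_d_1_0]
  rfl

noncomputable def resOf (hIa : I = Ideal.span {a}) : ProjectiveResolution (ModuleCat.of R (R ⧸ I)) where
  complex := resCplx a
  π := (ChainComplex.toSingle₀Equiv _ _).symm
        ⟨ModuleCat.ofHom (Submodule.mkQ I), d10_comp_mkQ a I hIa⟩
  quasiIso := ⟨fun n => by
    cases n with
    | zero =>
      rw [ChainComplex.quasiIsoAt₀_iff, ShortComplex.quasiIso_iff_of_zeros']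
      · refine (ShortComplex.exact_and_epi_g_iff_of_iso ?_).2
          ⟨exact_mul_mkQ a I hIa, ?_⟩
        · exact ShortComplex.isoMk (Iso.refl _) (Iso.refl _) (Iso.refl _)
            ((Category.id_comp _).trans (Category.comp_id _).symm)
            ((Category.id_comp _).trans (Category.comp_id _).symm)
        · show Epi (ModuleCat.ofHom (Submodule.mkQ I))
          exact (ModuleCat.epi_iff_surjective _).2 (Submodule.mkQ_surjective I)
      all_goals rfl
    | succ n =>
      rw [quasiIsoAt_iff_exactAt']
      · apply resCplx_exactAt_succ
      · apply ChainComplex.exactAt_succ_single_obj⟩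

end Res

end Aux

/-- Let `R` be a discrete φ-chained ring, i.e. a φ-ring in which every
nonnil ideal is principal generated by a non-nilpotent element. Then every
nonnil-divisible `R`-module `E` is nonnil-injective. -/
theorem stmt_16 (R : Type u) [CommRing R]
    (hp : (nilradical R).IsPrime)
    (hdiv : ∀ x ∉ nilradical R, nilradical R < Ideal.span {x})
    (hprin : ∀ I : Ideal R, ¬ I ≤ nilradical R →
      ∃ a ∉ nilradical R, I = Ideal.span {a})
    (E : ModuleCat.{u} R)
    (hE : ∀ (m : E) (a : R), a ∉ nilradical R → ∃ x : E, a • x = m) :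
    ∀ I : Ideal R, ¬ I ≤ nilradical R →
      Subsingleton (((Ext R (ModuleCat.{u} R) 1).obj
        (Opposite.op (ModuleCat.of R (R ⧸ I)))).obj E) := by
  intro I hI
  obtain ⟨a, ha, hIa⟩ := hprin I hI
  set P := resOf a I hIa with hP
  have h1 : (P.complex.linearYonedaObj R E).ExactAt 1 := by
    rw [HomologicalComplex.exactAt_iff' _ 0 1 2 (by simp) (by simp)]
    rw [ShortComplex.moduleCat_exact_iff]
    intro (f : ModuleCat.of R R ⟶ E) hf
    obtain ⟨x, hx⟩ := hE (f (show ↑(ModuleCat.of R R) from (1:R))) a ha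
    refine ⟨ModuleCat.ofHom (LinearMap.toSpanSingleton R E x), ?_⟩
    show (resCplx a).d 1 0 ≫ ModuleCat.ofHom (LinearMap.toSpanSingleton R E x) = f
    rw [resCplx_d_1_0]
    apply ModuleCat.hom_ext
    apply LinearMap.ext
    intro (r : R)
    show (a * r) • x = f r
    calc (a * r) • x = r • (a • x) := by rw [mul_comm, mul_smul]
    _ = r • f (show ↑(ModuleCat.of R R) from (1:R)) := by rw [hx]
    _ = f (show ↑(ModuleCat.of R R) from r • (1:R)) := by rw [map_smul]
    _ = f r := by norm_num
  have hz : Limits.IsZero (((Ext R (ModuleCat.{u} R) 1).obj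
      (Opposite.op (ModuleCat.of R (R ⧸ I)))).obj E) := by
    refine Limits.IsZero.of_iso ?_ (P.isoExt 1 E)
    rw [← HomologicalComplex.exactAt_iff_isZero_homology]
    exact h1
  constructor
  intro m n
  have h0 : (𝟙 (((Ext R (ModuleCat.{u} R) 1).obj
      (Opposite.op (ModuleCat.of R (R ⧸ I)))).obj E)) = 0 := hz.eq_of_src _ _
  have key : ∀ y : (((Ext R (ModuleCat.{u} R) 1).obj
      (Opposite.op (ModuleCat.of R (R ⧸ I)))).obj E), y = 0 := by
    intro y
    have := ConcreteCategory.congr_hom h0 y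
    simpa using this
  rw [key m, key n]
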